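/- Let A be a unit sign row matrix of size m × n and let K be an n × n diagonal matrix with strictly positive diagonal entries. Then the m × m matrix A·K·Aᵀ is invertible and, for every f ∈ ℝⁿ, −(A·K·Aᵀ)⁻¹ · (A·K·f) = −A·f. In particular, the multiplier vector π = −(h̃_θ K_θ h̃_θᵀ)⁻¹ h̃_θ K_θ f_θ of Eq. (27) equals −h̃_θ f_θ and is independent of the diagonal positive-definite gain matrix K_θ. -/

import Mathlib

open Matrix

/-- A unit sign row matrix: each row has exactly one nonzero entry, equal to `±1`,
located in a distinct column. -/
def IsUnitSignRow {m n : ℕ} (A : Matrix (Fin m) (Fin n) ℝ) : Prop :=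
  ∃ (σ : Fin m → Fin n) (ε : Fin m → ℝ),
    Function.Injective σ ∧ (∀ i, ε i = 1 ∨ ε i = -1) ∧
    ∀ i j, A i j = if j = σ i then ε i else 0

/-- (Eq. 37) If `A` is a unit sign row matrix and `K` is diagonal with strictly
positive diagonal entries, then `A·K·Aᵀ` is invertible and the multiplier
`π = −(A K Aᵀ)⁻¹ A K f` equals `−A f`, independently of `K`. -/
theorem multiplier_independent_of_gain {m n : ℕ} (A : Matrix (Fin m) (Fin n) ℝ)
    (hA : IsUnitSignRow A)
    (K : Matrix (Fin n) (Fin n) ℝ) (d : Fin n → ℝ)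
    (hd : ∀ i, 0 < d i) (hK : K = Matrix.diagonal d) :
    IsUnit (A * K * Aᵀ) ∧
    ∀ f : Fin n → ℝ, -((A * K * Aᵀ)⁻¹ *ᵥ ((A * K) *ᵥ f)) = -(A *ᵥ f) := by
  obtain ⟨σ, ε, hσ, hε, hAij⟩ := hA
  subst hK
  -- `A K Aᵀ` is diagonal with entries `d (σ i)`.
  have hdiag : A * Matrix.diagonal d * Aᵀ = Matrix.diagonal (fun i => d (σ i)) := by
    ext i k
    by_cases h : i = k
    · subst h
      rcases hε i with he | he <;>
        simp [Matrix.mul_apply, Matrix.mul_diagonal, Matrix.transpose_apply, hAij, he,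
          Matrix.diagonal_apply, ite_mul, mul_ite, Finset.sum_ite_eq']
    · have hne : σ k ≠ σ i := fun hc => h (hσ hc).symm
      simp [Matrix.mul_apply, Matrix.mul_diagonal, Matrix.transpose_apply, hAij,
        Matrix.diagonal_apply, h, hne, ite_mul, mul_ite, Finset.sum_ite_eq',
        Finset.sum_ite_eq]
  have hinv : IsUnit (A * Matrix.diagonal d * Aᵀ) := by
    rw [hdiag, Matrix.isUnit_diagonal]
    exact IsUnit.of_mul_eq_one (fun i => (d (σ i))⁻¹)
      (funext fun i => by simp [mul_inv_cancel₀ (hd (σ i)).ne'])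
  refine ⟨hinv, ?_⟩
  -- Explicit inverse of the diagonal matrix.
  have hinvmat : (A * Matrix.diagonal d * Aᵀ)⁻¹ = Matrix.diagonal (fun i => (d (σ i))⁻¹) := by
    rw [hdiag]
    apply Matrix.inv_eq_right_inv
    rw [Matrix.diagonal_mul_diagonal]
    have h1 : (fun i => d (σ i) * (d (σ i))⁻¹) = fun _ : Fin m => (1 : ℝ) :=
      funext fun i => mul_inv_cancel₀ (hd (σ i)).ne'
    rw [h1]
    exact Matrix.diagonal_one
  -- `(A K Aᵀ)⁻¹ * (A K) = A`.
  have hmain : (A * Matrix.diagonal d * Aᵀ)⁻¹ * (A * Matrix.diagonal d) = A := by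
    rw [hinvmat]
    ext i j
    simp only [Matrix.diagonal_mul, Matrix.mul_diagonal]
    by_cases h : j = σ i
    · subst h
      simp only [hAij, if_pos rfl]
      rw [mul_comm ((d (σ i))⁻¹), mul_assoc, mul_inv_cancel₀ (hd (σ i)).ne', mul_one]
    · simp [hAij, h]
  intro f
  rw [Matrix.mulVec_mulVec, hmain]
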